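/- (Lemma 1.) For every t ≥ 1 and every u_t ∈ ℝ^d, the infimum over (u_1, …, u_{t−1}) ∈ (ℝ^d)^{t−1} of Q_t(u_1, …, u_t) is attained and equals u_tᵀ D_t u_t − 2 u_tᵀ e_t + f_t, where D_t, e_t, f_t are given by the recurrences D_1 = b I + x_1 x_1ᵀ, D_t = (D_{t−1}^{−1} + c^{−1} I)^{−1} + x_t x_tᵀ; e_1 = y_1 x_1, e_t = (I + c^{−1} D_{t−1})^{−1} e_{t−1} + y_t x_t; f_1 = y_1², f_t = f_{t−1} − e_{t−1}ᵀ (c I + D_{t−1})^{−1} e_{t−1} + y_t². Moreover D_t is positive definite for every t. -/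

import Mathlib

set_option autoImplicit false

open Matrix Finset

noncomputable section

/-- `D_1 = b I + x_1 x_1ᵀ`, `D_t = (D_{t-1}⁻¹ + c⁻¹ I)⁻¹ + x_t x_tᵀ` for `t ≥ 2`. -/
def lasecD (d : ℕ) (b c : ℝ) (x : ℕ → Fin d → ℝ) : ℕ → Matrix (Fin d) (Fin d) ℝ
  | 0 => 1  -- unused
  | 1 => b • (1 : Matrix (Fin d) (Fin d) ℝ) + vecMulVec (x 1) (x 1)
  | t + 2 => ((lasecD d b c x (t + 1))⁻¹ + c⁻¹ • (1 : Matrix (Fin d) (Fin d) ℝ))⁻¹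
      + vecMulVec (x (t + 2)) (x (t + 2))

/-- `e_1 = y_1 x_1`, `e_t = (I + c⁻¹ D_{t-1})⁻¹ e_{t-1} + y_t x_t` for `t ≥ 2`. -/
def lasecE (d : ℕ) (b c : ℝ) (x : ℕ → Fin d → ℝ) (y : ℕ → ℝ) : ℕ → (Fin d → ℝ)
  | 0 => 0  -- unused
  | 1 => y 1 • x 1
  | t + 2 => ((1 : Matrix (Fin d) (Fin d) ℝ) + c⁻¹ • lasecD d b c x (t + 1))⁻¹ *ᵥ
        lasecE d b c x y (t + 1) + y (t + 2) • x (t + 2)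

/-- `f_1 = y_1²`, `f_t = f_{t-1} - e_{t-1}ᵀ (c I + D_{t-1})⁻¹ e_{t-1} + y_t²` for `t ≥ 2`. -/
def lasecF (d : ℕ) (b c : ℝ) (x : ℕ → Fin d → ℝ) (y : ℕ → ℝ) : ℕ → ℝ
  | 0 => 0  -- unused
  | 1 => (y 1) ^ 2
  | t + 2 => lasecF d b c x y (t + 1)
      - lasecE d b c x y (t + 1) ⬝ᵥ
          ((c • (1 : Matrix (Fin d) (Fin d) ℝ) + lasecD d b c x (t + 1))⁻¹ *ᵥ
            lasecE d b c x y (t + 1))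
      + (y (t + 2)) ^ 2

/-- `Q_t(u_1,…,u_t) = b‖u_1‖² + c Σ_{s=1}^{t-1} ‖u_{s+1}-u_s‖² + Σ_{s=1}^{t} (y_s - u_sᵀx_s)²`. -/
def lasecQ (d : ℕ) (b c : ℝ) (x : ℕ → Fin d → ℝ) (y : ℕ → ℝ) (t : ℕ)
    (u : ℕ → Fin d → ℝ) : ℝ :=
  b * (∑ i, (u 1 i) ^ 2) + c * ∑ s ∈ Icc 1 (t - 1), ∑ i, (u (s + 1) i - u s i) ^ 2
    + ∑ s ∈ Icc 1 t, (y s - u s ⬝ᵥ x s) ^ 2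

/-! ### Auxiliary lemmas -/

section Aux

variable {d : ℕ}

lemma lasec_herm_iff (M : Matrix (Fin d) (Fin d) ℝ) : M.IsHermitian ↔ Mᵀ = M := by
  rw [Matrix.IsHermitian, Matrix.conjTranspose_eq_transpose_of_trivial]

lemma lasec_posDef_smul_one {c : ℝ} (hc : 0 < c) :
    (c • (1 : Matrix (Fin d) (Fin d) ℝ)).PosDef := by
  rw [Matrix.posDef_iff_dotProduct_mulVec]
  constructor
  · rw [lasec_herm_iff]; simp
  · intro v hv
    have h1 : (c • (1 : Matrix (Fin d) (Fin d) ℝ)) *ᵥ v = c • v := by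
      simp [Matrix.smul_mulVec]
    rw [h1]
    simp only [star_trivial, dotProduct_smul, smul_eq_mul]
    have hvv : 0 < v ⬝ᵥ v := by
      obtain ⟨i, hi⟩ := Function.ne_iff.mp hv
      have hi' : v i ≠ 0 := by simpa using hi
      have : (0:ℝ) < ∑ j, v j * v j :=
        Finset.sum_pos' (fun j _ => mul_self_nonneg (v j))
          ⟨i, Finset.mem_univ i, mul_self_pos.mpr hi'⟩
      simpa [dotProduct] using this
    positivity

lemma lasec_vecMulVec_mulVec (x v : Fin d → ℝ) :
    vecMulVec x x *ᵥ v = (x ⬝ᵥ v) • x := by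
  ext i
  simp [vecMulVec_apply, mulVec, dotProduct, Finset.mul_sum, mul_comm, mul_left_comm]

lemma lasec_posSemidef_vecMulVec (x : Fin d → ℝ) : (vecMulVec x x).PosSemidef := by
  rw [Matrix.posSemidef_iff_dotProduct_mulVec]
  constructor
  · rw [lasec_herm_iff]; ext i j; simp [vecMulVec_apply, mul_comm]
  · intro v
    rw [lasec_vecMulVec_mulVec]
    simp only [star_trivial, dotProduct_smul, smul_eq_mul]
    rw [dotProduct_comm]
    exact mul_self_nonneg _

lemma lasec_symm_swap {M : Matrix (Fin d) (Fin d) ℝ} (hM : M.IsHermitian)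
    (a b : Fin d → ℝ) : a ⬝ᵥ (M *ᵥ b) = b ⬝ᵥ (M *ᵥ a) := by
  rw [lasec_herm_iff] at hM
  rw [dotProduct_mulVec, ← hM, Matrix.vecMul_transpose, hM, dotProduct_comm]

lemma lasec_dot_sq (v : Fin d → ℝ) : ∑ i, (v i) ^ 2 = v ⬝ᵥ v := by
  simp [dotProduct, sq]

variable {D : Matrix (Fin d) (Fin d) ℝ} {c : ℝ}

lemma lasec_det_unit {M : Matrix (Fin d) (Fin d) ℝ} (h : M.PosDef) : IsUnit M.det :=
  isUnit_iff_ne_zero.mpr h.det_pos.ne'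

lemma lasec_lemB (hD : D.PosDef) (hc : 0 < c) :
    ((1 : Matrix (Fin d) (Fin d) ℝ) + c⁻¹ • D)⁻¹
      = c • (c • (1 : Matrix (Fin d) (Fin d) ℝ) + D)⁻¹ := by
  have hA : (c • (1 : Matrix (Fin d) (Fin d) ℝ) + D).PosDef :=
    (lasec_posDef_smul_one hc).add hD
  apply Matrix.inv_eq_right_inv
  rw [mul_smul_comm, ← smul_mul_assoc]
  have h1 : c • ((1 : Matrix (Fin d) (Fin d) ℝ) + c⁻¹ • D)
      = c • (1 : Matrix (Fin d) (Fin d) ℝ) + D := by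
    rw [smul_add, smul_smul, mul_inv_cancel₀ hc.ne', one_smul]
  rw [h1, Matrix.mul_nonsing_inv _ (lasec_det_unit hA)]

lemma lasec_lemA (hD : D.PosDef) (hc : 0 < c) :
    (D⁻¹ + c⁻¹ • (1 : Matrix (Fin d) (Fin d) ℝ))⁻¹
      = c • (1 : Matrix (Fin d) (Fin d) ℝ)
        - (c ^ 2) • (c • (1 : Matrix (Fin d) (Fin d) ℝ) + D)⁻¹ := by
  have hA : (c • (1 : Matrix (Fin d) (Fin d) ℝ) + D).PosDef :=
    (lasec_posDef_smul_one hc).add hD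
  set A := c • (1 : Matrix (Fin d) (Fin d) ℝ) + D with hAdef
  apply Matrix.inv_eq_right_inv
  have hDA : D⁻¹ * A = c • D⁻¹ + 1 := by
    rw [hAdef, Matrix.mul_add, mul_smul_comm, Matrix.mul_one,
      Matrix.nonsing_inv_mul _ (lasec_det_unit hD)]
  have h3 : (c ^ 2) • (D⁻¹ * A⁻¹) + c • A⁻¹ = c • D⁻¹ := by
    have : c • D⁻¹ = c • ((D⁻¹ * A) * A⁻¹) := by
      rw [Matrix.mul_assoc, Matrix.mul_nonsing_inv _ (lasec_det_unit hA), Matrix.mul_one]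
    rw [this, hDA, Matrix.add_mul, Matrix.one_mul, smul_mul_assoc, smul_add,
      smul_smul, sq]
  calc (D⁻¹ + c⁻¹ • (1 : Matrix (Fin d) (Fin d) ℝ))
        * (c • (1 : Matrix (Fin d) (Fin d) ℝ) - (c ^ 2) • A⁻¹)
      = (c • D⁻¹ + 1) - ((c ^ 2) • (D⁻¹ * A⁻¹) + c • A⁻¹) := by
        simp only [mul_sub, Matrix.add_mul, smul_mul_assoc, mul_smul_comm,
          Matrix.one_mul, Matrix.mul_one, smul_smul, smul_add,
          inv_mul_cancel₀ hc.ne', one_smul]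
        match_scalars <;> (field_simp; try ring)
    _ = 1 := by rw [h3]; abel

lemma lasec_expand {A : Matrix (Fin d) (Fin d) ℝ} (hA : A.PosDef) (g v : Fin d → ℝ) :
    (v - A⁻¹ *ᵥ g) ⬝ᵥ (A *ᵥ (v - A⁻¹ *ᵥ g))
      = v ⬝ᵥ (A *ᵥ v) - 2 * (v ⬝ᵥ g) + g ⬝ᵥ (A⁻¹ *ᵥ g) := by
  have hAg : A *ᵥ (A⁻¹ *ᵥ g) = g := by
    rw [Matrix.mulVec_mulVec, Matrix.mul_nonsing_inv _ (lasec_det_unit hA),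
      Matrix.one_mulVec]
  have hswap : (A⁻¹ *ᵥ g) ⬝ᵥ (A *ᵥ v) = v ⬝ᵥ g := by
    rw [lasec_symm_swap hA.isHermitian, hAg]
  rw [Matrix.mulVec_sub, hAg, dotProduct_sub, sub_dotProduct, sub_dotProduct, hswap,
    dotProduct_comm (A⁻¹ *ᵥ g) g]
  ring

lemma lasec_lowerBound {A : Matrix (Fin d) (Fin d) ℝ} (hA : A.PosDef) (g v : Fin d → ℝ) :
    -(g ⬝ᵥ (A⁻¹ *ᵥ g)) ≤ v ⬝ᵥ (A *ᵥ v) - 2 * (v ⬝ᵥ g) := by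
  have h0 : (0:ℝ) ≤ (v - A⁻¹ *ᵥ g) ⬝ᵥ (A *ᵥ (v - A⁻¹ *ᵥ g)) := by
    simpa using hA.posSemidef.dotProduct_mulVec_nonneg (v - A⁻¹ *ᵥ g)
  rw [lasec_expand hA g v] at h0
  linarith

lemma lasec_min_eq {A : Matrix (Fin d) (Fin d) ℝ} (hA : A.PosDef) (g : Fin d → ℝ) :
    (A⁻¹ *ᵥ g) ⬝ᵥ (A *ᵥ (A⁻¹ *ᵥ g)) - 2 * ((A⁻¹ *ᵥ g) ⬝ᵥ g) = -(g ⬝ᵥ (A⁻¹ *ᵥ g)) := by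
  have h := lasec_expand hA g (A⁻¹ *ᵥ g)
  rw [sub_self] at h
  simp only [Matrix.mulVec_zero, dotProduct_zero, zero_dotProduct] at h
  linarith [h]

end Aux

section QAux

variable {d : ℕ} {b c : ℝ} {x : ℕ → Fin d → ℝ} {y : ℕ → ℝ}

lemma lasecQ_succ (k : ℕ) (u : ℕ → Fin d → ℝ) :
    lasecQ d b c x y (k + 2) u = lasecQ d b c x y (k + 1) u
      + c * ((u (k + 2) - u (k + 1)) ⬝ᵥ (u (k + 2) - u (k + 1)))
      + (y (k + 2) - u (k + 2) ⬝ᵥ x (k + 2)) ^ 2 := by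
  unfold lasecQ
  have h1 : (k + 2) - 1 = k + 1 := rfl
  have h2 : (k + 1) - 1 = k := rfl
  rw [h1, h2, Finset.sum_Icc_succ_top (by omega : 1 ≤ k + 1),
    show k + 2 = (k + 1) + 1 from rfl,
    Finset.sum_Icc_succ_top (by omega : 1 ≤ (k + 1) + 1)]
  have h3 : (u (k + 1 + 1) - u (k + 1)) ⬝ᵥ (u (k + 1 + 1) - u (k + 1))
      = ∑ i, (u (k + 1 + 1) i - u (k + 1) i) ^ 2 := by
    simp [dotProduct, sq]
  rw [← h3]
  ring

lemma lasecQ_congr {t : ℕ} (ht : 1 ≤ t) {u u' : ℕ → Fin d → ℝ}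
    (h : ∀ s, s ≤ t → u s = u' s) :
    lasecQ d b c x y t u = lasecQ d b c x y t u' := by
  unfold lasecQ
  have h1 : u 1 = u' 1 := h 1 ht
  have h2 : ∑ s ∈ Icc 1 (t - 1), ∑ i, (u (s + 1) i - u s i) ^ 2
      = ∑ s ∈ Icc 1 (t - 1), ∑ i, (u' (s + 1) i - u' s i) ^ 2 := by
    refine Finset.sum_congr rfl fun s hs => ?_
    simp only [Finset.mem_Icc] at hs
    rw [h s (by omega), h (s + 1) (by omega)]
  have h3 : ∑ s ∈ Icc 1 t, (y s - u s ⬝ᵥ x s) ^ 2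
      = ∑ s ∈ Icc 1 t, (y s - u' s ⬝ᵥ x s) ^ 2 := by
    refine Finset.sum_congr rfl fun s hs => ?_
    simp only [Finset.mem_Icc] at hs
    rw [h s (by omega)]
  rw [h1, h2, h3]

end QAux

/-- Lemma 1: for every `t ≥ 1` and every `u_t`, the infimum of
`Q_t(u_1,…,u_t)` over `u_1,…,u_{t-1}` is attained and equals
`u_tᵀ D_t u_t - 2 u_tᵀ e_t + f_t`; moreover every `D_t` (`t ≥ 1`) is positive definite. -/
theorem lasec_lemma1 (d : ℕ) (hd : 1 ≤ d) (b c : ℝ) (hb : 0 < b) (hbc : b < c)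
    (x : ℕ → Fin d → ℝ) (y : ℕ → ℝ) :
    (∀ t : ℕ, 1 ≤ t → ∀ ut : Fin d → ℝ,
      IsLeast {r : ℝ | ∃ u : ℕ → Fin d → ℝ, u t = ut ∧ r = lasecQ d b c x y t u}
        (ut ⬝ᵥ (lasecD d b c x t *ᵥ ut) - 2 * (ut ⬝ᵥ lasecE d b c x y t)
          + lasecF d b c x y t)) ∧
    (∀ t : ℕ, 1 ≤ t → (lasecD d b c x t).PosDef) := by
  have hc : 0 < c := hb.trans hbc
  have hD : ∀ t : ℕ, 1 ≤ t → (lasecD d b c x t).PosDef := by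
    intro t ht
    induction t, ht using Nat.le_induction with
    | base =>
      exact (lasec_posDef_smul_one hb).add_posSemidef (lasec_posSemidef_vecMulVec _)
    | succ n hn ih =>
      obtain ⟨k, rfl⟩ : ∃ k, n = k + 1 := ⟨n - 1, by omega⟩
      have h1 : ((lasecD d b c x (k + 1))⁻¹
          + c⁻¹ • (1 : Matrix (Fin d) (Fin d) ℝ)).PosDef :=
        ih.inv.add (lasec_posDef_smul_one (inv_pos.mpr hc))
      exact h1.inv.add_posSemidef (lasec_posSemidef_vecMulVec _)
  refine ⟨?_, hD⟩
  intro t ht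
  induction t, ht using Nat.le_induction with
  | base =>
    intro ut
    have hval : ∀ u : ℕ → Fin d → ℝ, u 1 = ut → lasecQ d b c x y 1 u
        = ut ⬝ᵥ (lasecD d b c x 1 *ᵥ ut) - 2 * (ut ⬝ᵥ lasecE d b c x y 1)
          + lasecF d b c x y 1 := by
      intro u hu
      show b * (∑ i, (u 1 i) ^ 2) + c * ∑ s ∈ Icc 1 (1 - 1), ∑ i, (u (s + 1) i - u s i) ^ 2
          + ∑ s ∈ Icc 1 1, (y s - u s ⬝ᵥ x s) ^ 2
        = ut ⬝ᵥ ((b • (1 : Matrix (Fin d) (Fin d) ℝ) + vecMulVec (x 1) (x 1)) *ᵥ ut)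
          - 2 * (ut ⬝ᵥ (y 1 • x 1)) + (y 1) ^ 2
      rw [show (1:ℕ) - 1 = 0 from rfl, show Icc 1 0 = (∅ : Finset ℕ) from rfl,
        Finset.Icc_self, Finset.sum_singleton, Finset.sum_empty, hu]
      rw [Matrix.add_mulVec, Matrix.smul_mulVec, Matrix.one_mulVec,
        lasec_vecMulVec_mulVec, lasec_dot_sq]
      simp only [dotProduct_add, dotProduct_smul, smul_eq_mul]
      rw [dotProduct_comm (x 1) ut]
      ring
    constructor
    · exact ⟨fun _ => ut, rfl, (hval (fun _ => ut) rfl).symm⟩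
    · rintro r ⟨u, hu, rfl⟩
      exact le_of_eq (hval u hu).symm
  | succ n hn IH =>
    obtain ⟨k, rfl⟩ : ∃ k, n = k + 1 := ⟨n - 1, by omega⟩
    intro w
    rw [show k + 1 + 1 = k + 2 from rfl]
    have hDk : (lasecD d b c x (k + 1)).PosDef := hD (k + 1) (by omega)
    have hA : (c • (1 : Matrix (Fin d) (Fin d) ℝ) + lasecD d b c x (k + 1)).PosDef :=
      (lasec_posDef_smul_one hc).add hDk
    set D := lasecD d b c x (k + 1) with hDdef
    set A := c • (1 : Matrix (Fin d) (Fin d) ℝ) + D with hAdef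
    set e := lasecE d b c x y (k + 1) with hedef
    set f := lasecF d b c x y (k + 1) with hfdef
    set g : Fin d → ℝ := e + c • w with hgdef
    have hDsucc : lasecD d b c x (k + 2)
        = (c • (1 : Matrix (Fin d) (Fin d) ℝ) - (c ^ 2) • A⁻¹)
          + vecMulVec (x (k + 2)) (x (k + 2)) := by
      show (D⁻¹ + c⁻¹ • (1 : Matrix (Fin d) (Fin d) ℝ))⁻¹
          + vecMulVec (x (k + 2)) (x (k + 2)) = _
      rw [lasec_lemA hDk hc, hAdef]
    have hEsucc : lasecE d b c x y (k + 2)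
        = c • (A⁻¹ *ᵥ e) + y (k + 2) • x (k + 2) := by
      show ((1 : Matrix (Fin d) (Fin d) ℝ) + c⁻¹ • D)⁻¹ *ᵥ e
          + y (k + 2) • x (k + 2) = _
      rw [lasec_lemB hDk hc, ← hAdef, Matrix.smul_mulVec]
    have hFsucc : lasecF d b c x y (k + 2)
        = f - e ⬝ᵥ (A⁻¹ *ᵥ e) + (y (k + 2)) ^ 2 := rfl
    have hVval : ∀ v : Fin d → ℝ,
        (v ⬝ᵥ (D *ᵥ v) - 2 * (v ⬝ᵥ e) + f) + c * ((w - v) ⬝ᵥ (w - v))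
          + (y (k + 2) - w ⬝ᵥ x (k + 2)) ^ 2
        = (v ⬝ᵥ (A *ᵥ v) - 2 * (v ⬝ᵥ g))
          + (f + c * (w ⬝ᵥ w) + (y (k + 2) - w ⬝ᵥ x (k + 2)) ^ 2) := by
      intro v
      rw [hAdef, hgdef]
      simp only [Matrix.add_mulVec, Matrix.smul_mulVec, Matrix.one_mulVec,
        dotProduct_add, dotProduct_smul, smul_eq_mul, dotProduct_sub, sub_dotProduct,
        Pi.smul_apply]
      rw [dotProduct_comm w v]
      ring
    have hAinvherm : (A⁻¹).IsHermitian := hA.inv.isHermitian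
    have hfinal : f + c * (w ⬝ᵥ w) + (y (k + 2) - w ⬝ᵥ x (k + 2)) ^ 2
          - g ⬝ᵥ (A⁻¹ *ᵥ g)
        = w ⬝ᵥ (lasecD d b c x (k + 2) *ᵥ w)
          - 2 * (w ⬝ᵥ lasecE d b c x y (k + 2)) + lasecF d b c x y (k + 2) := by
      rw [hDsucc, hEsucc, hFsucc, hgdef]
      have hge : g ⬝ᵥ (A⁻¹ *ᵥ g)
          = e ⬝ᵥ (A⁻¹ *ᵥ e) + 2 * (c * (w ⬝ᵥ (A⁻¹ *ᵥ e)))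
            + c * (c * (w ⬝ᵥ (A⁻¹ *ᵥ w))) := by
        rw [hgdef]
        simp only [Matrix.mulVec_add, Matrix.mulVec_smul, dotProduct_add,
          add_dotProduct, dotProduct_smul, smul_dotProduct, smul_eq_mul]
        rw [lasec_symm_swap hAinvherm e w]
        ring
      rw [← hgdef, hge]
      simp only [Matrix.add_mulVec, Matrix.sub_mulVec, Matrix.smul_mulVec,
        Matrix.one_mulVec, lasec_vecMulVec_mulVec, dotProduct_add, dotProduct_sub,
        dotProduct_smul, smul_eq_mul]
      rw [dotProduct_comm (x (k + 2)) w]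
      ring
    constructor
    · obtain ⟨u, hu, hQu⟩ := (IH (A⁻¹ *ᵥ g)).1
      refine ⟨Function.update u (k + 2) w, Function.update_self _ _ _, ?_⟩
      have hcongr : lasecQ d b c x y (k + 1) (Function.update u (k + 2) w)
          = lasecQ d b c x y (k + 1) u :=
        lasecQ_congr (by omega) (fun s hs => Function.update_of_ne (by omega) _ _)
      rw [lasecQ_succ, hcongr, Function.update_self,
        Function.update_of_ne (by omega : (k+1 : ℕ) ≠ k + 2), ← hQu, hu]
      rw [hVval (A⁻¹ *ᵥ g), ← hfinal]
      have hmin := lasec_min_eq hA g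
      linarith [hmin]
    · rintro r ⟨u, hu, rfl⟩
      rw [lasecQ_succ, hu]
      have h1 : (u (k+1)) ⬝ᵥ (D *ᵥ (u (k+1))) - 2 * ((u (k+1)) ⬝ᵥ e) + f
          ≤ lasecQ d b c x y (k + 1) u := by
        exact (IH (u (k + 1))).2 ⟨u, rfl, rfl⟩
      have h2 := lasec_lowerBound hA g (u (k + 1))
      have h3 := hVval (u (k + 1))
      rw [← hfinal]
      linarith [h1, h2, h3]

end
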